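/- Let r ∈ ℂ. For t in the lower half-plane and z in the upper half-plane let ω_r(F;t,z) = (z-t)^(r-2) F(z) dz with arg(z-t) ∈ (-π/2, 3π/2). Then for every g = [[a,b],[c,d]] ∈ SL₂(ℝ), (cz+d)^(-r) F(gz) · (g z - g t)^(r-2) · (ct+d)^(r-2) · d(gz) = (z-t)^(r-2) F(z) dz, i.e. ω_r transforms equivariantly: ω_r(F; ·, gz)|_{2-r} g = ω_r(F|_r g; ·, z), where the actions use the argument conventions arg(cz+d) ∈ (-π,π] for z ∈ ℍ and arg(ct+d) ∈ [-π,π) for t ∈ ℍ⁻. -/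
import Mathlib


open Complex

/-- Lower row of the Möbius action: `cz + d`. -/
noncomputable def mdenom (g : Matrix.SpecialLinearGroup (Fin 2) ℝ) (z : ℂ) : ℂ :=
  (g.1 1 0 : ℂ) * z + (g.1 1 1 : ℂ)

/-- Möbius action of `SL₂(ℝ)` on ℂ: `(az+b)/(cz+d)`. -/
noncomputable def mact (g : Matrix.SpecialLinearGroup (Fin 2) ℝ) (z : ℂ) : ℂ :=
  ((g.1 0 0 : ℂ) * z + (g.1 0 1 : ℂ)) / mdenom g z

/-- Complex power with the branch `arg ∈ [-π, π)` (used for `(ct+d)^s` with `t` in the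
lower half-plane); it agrees with the principal branch except on `(-∞, 0)`. -/
noncomputable def cpowLHP (w s : ℂ) : ℂ :=
  if w.arg = Real.pi then Complex.exp (s * (Complex.log w - 2 * (Real.pi : ℂ) * Complex.I))
  else w ^ s

lemma im_lin (c d : ℝ) (z : ℂ) : ((c:ℂ)*z + (d:ℂ)).im = c * z.im := by
  simp

lemma lin_ne_zero (c d : ℝ) (z : ℂ) (hz : z.im ≠ 0) (hcd : c ≠ 0 ∨ d ≠ 0) :
    (c:ℂ)*z + (d:ℂ) ≠ 0 := by
  rcases eq_or_ne c 0 with hc | hc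
  · subst hc
    simp only [ofReal_zero, zero_mul, zero_add, ne_eq, ofReal_eq_zero]
    tauto
  · intro h
    have : ((c:ℂ)*z + (d:ℂ)).im = 0 := by rw [h]; simp
    rw [im_lin] at this
    exact hz ((mul_eq_zero.mp this).resolve_left hc)

lemma im_mobius (a b c d : ℝ) (z : ℂ) (h : (c:ℂ)*z + (d:ℂ) ≠ 0) :
    (((a:ℂ)*z + (b:ℂ)) / ((c:ℂ)*z + (d:ℂ))).im
      = (a*d - b*c) * z.im / Complex.normSq ((c:ℂ)*z + (d:ℂ)) := by
  rw [Complex.div_im]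
  simp [Complex.normSq_apply]
  ring

lemma arg_pos_of_im_pos {w : ℂ} (hwim : 0 < w.im) : 0 < w.arg := by
  rcases lt_or_eq_of_le (Complex.arg_nonneg_iff.mpr hwim.le) with h | h
  · exact h
  · exact absurd (Complex.arg_eq_zero_iff.mp h.symm).2 hwim.ne'

lemma log_unique (w L : ℂ) (hw : Complex.exp L = w) (h1 : -Real.pi < L.im)
    (h2 : L.im < 2 * Real.pi) (hwim : 0 < w.im) : Complex.log w = L := by
  have hw0 : w ≠ 0 := by
    intro h; rw [h] at hwim; simp at hwim
  have h3 : Complex.exp (Complex.log w) = Complex.exp L := by rw [Complex.exp_log hw0, hw]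
  obtain ⟨n, hn⟩ := Complex.exp_eq_exp_iff_exists_int.mp h3
  have him : (Complex.log w).im = L.im + n * (2 * Real.pi) := by
    rw [hn]; simp
  rw [Complex.log_im] at him
  have harg1 : 0 < w.arg := arg_pos_of_im_pos hwim
  have harg2 : w.arg < Real.pi := Complex.arg_lt_pi_iff.mpr (Or.inr hwim.ne')
  have hpi := Real.pi_pos
  have hn0 : n = 0 := by
    have hlow : -1 < (n:ℝ) := by nlinarith
    have hhigh : (n:ℝ) < 1 := by nlinarith
    exact_mod_cast by
      have : -1 < n ∧ n < 1 := ⟨by exact_mod_cast hlow, by exact_mod_cast hhigh⟩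
      omega
  rw [hn0] at hn
  simpa using hn


/-- equivariance of the differential form
`ω_r(F;t,z) = (z-t)^(r-2) F z dz`:  `ω_r(F; ·, gz)|_{2-r} g = ω_r(F|_r g; ·, z)`,
i.e. `(ct+d)^(r-2) (gz - gt)^(r-2) F(gz) d(gz) = (z-t)^(r-2) (cz+d)^(-r) F(gz) dz`,
with the argument conventions `arg(cz+d) ∈ (-π,π]` for `z ∈ ℍ` (principal branch) and
`arg(ct+d) ∈ [-π,π)` for `t ∈ ℍ⁻`, and `arg(z-t), arg(gz-gt) ∈ (-π/2, 3π/2)` (realized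
by the principal branch since the imaginary parts are positive). -/
theorem omega_r_equivariance (r : ℂ) (F : ℂ → ℂ)
    (g : Matrix.SpecialLinearGroup (Fin 2) ℝ) (z t : ℂ)
    (hz : 0 < z.im) (ht : t.im < 0) :
    cpowLHP (mdenom g t) (r - 2) * ((mact g z - mact g t) ^ (r - 2)) * F (mact g z) *
        (mdenom g z) ^ (-2 : ℤ) =
      ((z - t) ^ (r - 2)) * ((mdenom g z) ^ (-r) * F (mact g z)) := by
  set a : ℝ := g.1 0 0 with ha
  set b : ℝ := g.1 0 1 with hb
  set c : ℝ := g.1 1 0 with hc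
  set d : ℝ := g.1 1 1 with hd
  have hdet : a * d - b * c = 1 := by
    have h2 := g.2
    rw [Matrix.det_fin_two] at h2
    rw [ha, hb, hc, hd]; linarith [h2]
  have hcd : c ≠ 0 ∨ d ≠ 0 := by
    by_contra h
    push_neg at h
    rw [h.1, h.2] at hdet; simp at hdet
  have hpi := Real.pi_pos
  set A : ℂ := mdenom g z with hA_def
  set B : ℂ := mdenom g t with hB_def
  have hAeq : A = (c:ℂ)*z + (d:ℂ) := rfl
  have hBeq : B = (c:ℂ)*t + (d:ℂ) := rfl
  have hA : A ≠ 0 := by rw [hAeq]; exact lin_ne_zero c d z hz.ne' hcd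
  have hB : B ≠ 0 := by rw [hBeq]; exact lin_ne_zero c d t ht.ne hcd
  have himA : A.im = c * z.im := by rw [hAeq]; exact im_lin c d z
  have himB : B.im = c * t.im := by rw [hBeq]; exact im_lin c d t
  have hgz : 0 < (mact g z).im := by
    rw [mact]
    rw [show mdenom g z = (c:ℂ)*z + (d:ℂ) from rfl]
    rw [im_mobius a b c d z (hAeq ▸ hA), hdet, one_mul]
    exact div_pos hz (Complex.normSq_pos.mpr (hAeq ▸ hA))
  have hgt : (mact g t).im < 0 := by
    rw [mact]
    rw [show mdenom g t = (c:ℂ)*t + (d:ℂ) from rfl]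
    rw [im_mobius a b c d t (hBeq ▸ hB), hdet, one_mul]
    exact div_neg_of_neg_of_pos ht (Complex.normSq_pos.mpr (hBeq ▸ hB))
  set w : ℂ := mact g z - mact g t with hw_def
  have hwim : 0 < w.im := by
    rw [hw_def, Complex.sub_im]; linarith
  have hdetC : (a:ℂ)*(d:ℂ) - (b:ℂ)*(c:ℂ) = 1 := by exact_mod_cast hdet
  have hnum : ((a:ℂ)*z + (b:ℂ)) * B - A * ((a:ℂ)*t + (b:ℂ)) = z - t := by
    rw [hAeq, hBeq]
    linear_combination (z - t) * hdetC
  have hdiff : w = (z - t) / (A * B) := by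
    have h1 : mact g z = ((a:ℂ)*z + (b:ℂ)) / A := rfl
    have h2 : mact g t = ((a:ℂ)*t + (b:ℂ)) / B := rfl
    rw [hw_def, h1, h2, div_sub_div _ _ hA hB, hnum]
  -- branch log of B
  set LB : ℂ := if B.arg = Real.pi then Complex.log B - 2 * (Real.pi:ℂ) * Complex.I
    else Complex.log B with hLB_def
  have hexpLB : Complex.exp LB = B := by
    rw [hLB_def]
    split_ifs
    · rw [Complex.exp_sub, Complex.exp_log hB, Complex.exp_two_pi_mul_I, div_one]
    · exact Complex.exp_log hB
  -- the sum of args bound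
  have hsum : -Real.pi < A.arg + LB.im ∧ A.arg + LB.im < Real.pi := by
    rcases lt_trichotomy c 0 with hcn | hc0 | hcp
    · have hAim : A.im < 0 := by rw [himA]; exact mul_neg_of_neg_of_pos hcn hz
      have hBim : 0 < B.im := by rw [himB]; exact mul_pos_of_neg_of_neg hcn ht
      have hargA1 : A.arg < 0 := Complex.arg_neg_iff.mpr hAim
      have hargA2 : -Real.pi < A.arg := Complex.neg_pi_lt_arg A
      have hargB1 : 0 < B.arg := arg_pos_of_im_pos hBim
      have hargB2 : B.arg < Real.pi := Complex.arg_lt_pi_iff.mpr (Or.inr hBim.ne')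
      have hLB : LB.im = B.arg := by
        rw [hLB_def, if_neg hargB2.ne, Complex.log_im]
      rw [hLB]; constructor <;> linarith
    · have hArl : A = (d:ℂ) := by rw [hAeq, hc0]; simp
      have hBrl : B = (d:ℂ) := by rw [hBeq, hc0]; simp
      have hd0 : d ≠ 0 := by
        rcases hcd with h | h
        · exact absurd hc0 h
        · exact h
      rcases lt_or_gt_of_ne hd0 with hdn | hdp
      · have hargA : A.arg = Real.pi := by rw [hArl]; exact Complex.arg_ofReal_of_neg hdn
        have hargB : B.arg = Real.pi := by rw [hBrl]; exact Complex.arg_ofReal_of_neg hdn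
        have hLB : LB.im = -Real.pi := by
          rw [hLB_def, if_pos hargB, Complex.sub_im, Complex.log_im, hargB]
          simp
          ring
        rw [hargA, hLB]; constructor <;> linarith
      · have hargA : A.arg = 0 := by rw [hArl]; exact Complex.arg_ofReal_of_nonneg hdp.le
        have hargB : B.arg = 0 := by rw [hBrl]; exact Complex.arg_ofReal_of_nonneg hdp.le
        have hLB : LB.im = 0 := by
          rw [hLB_def, if_neg (by rw [hargB]; exact hpi.ne), Complex.log_im, hargB]
        rw [hargA, hLB]; constructor <;> linarith
    · have hAim : 0 < A.im := by rw [himA]; exact mul_pos hcp hz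
      have hBim : B.im < 0 := by rw [himB]; exact mul_neg_of_pos_of_neg hcp ht
      have hargA1 : 0 < A.arg := arg_pos_of_im_pos hAim
      have hargA2 : A.arg < Real.pi := Complex.arg_lt_pi_iff.mpr (Or.inr hAim.ne')
      have hargB1 : B.arg < 0 := Complex.arg_neg_iff.mpr hBim
      have hargB2 : -Real.pi < B.arg := Complex.neg_pi_lt_arg B
      have hLB : LB.im = B.arg := by
        rw [hLB_def, if_neg (by intro h; rw [h] at hargB1; linarith), Complex.log_im]
      rw [hLB]; constructor <;> linarith
  -- the log identity
  have hzt : 0 < (z - t).im := by rw [Complex.sub_im]; linarith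
  have hzt0 : z - t ≠ 0 := by
    intro h; rw [h] at hzt; simp at hzt
  set L : ℂ := Complex.log (z - t) - Complex.log A - LB with hL_def
  have hexpL : Complex.exp L = w := by
    rw [hL_def, Complex.exp_sub, Complex.exp_sub, Complex.exp_log hzt0,
      Complex.exp_log hA, hexpLB, hdiff, div_div]
  have hLim : L.im = (z - t).arg - A.arg - LB.im := by
    rw [hL_def]; simp [Complex.sub_im, Complex.log_im]
  have hargzt1 : 0 < (z - t).arg := arg_pos_of_im_pos hzt
  have hargzt2 : (z - t).arg < Real.pi := Complex.arg_lt_pi_iff.mpr (Or.inr hzt.ne')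
  have hlogw : Complex.log w = L := by
    refine log_unique w L hexpL ?_ ?_ hwim
    · rw [hLim]; linarith [hsum.2]
    · rw [hLim]; linarith [hsum.1]
  -- now compute
  have hw0 : w ≠ 0 := by intro h; rw [h] at hwim; simp at hwim
  have hcpB : cpowLHP B (r - 2) = Complex.exp ((r - 2) * LB) := by
    rw [cpowLHP, hLB_def]
    split_ifs
    · rfl
    · rw [Complex.cpow_def_of_ne_zero hB, mul_comm]
  have hcpw : w ^ (r - 2) = Complex.exp ((r - 2) * L) := by
    rw [Complex.cpow_def_of_ne_zero hw0, hlogw, mul_comm]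
  rw [hcpB, hcpw, ← Complex.exp_add]
  have hexp1 : (r - 2) * LB + (r - 2) * L = Complex.log (z - t) * (r - 2) + (-(r - 2)) * Complex.log A := by
    rw [hL_def]; ring
  rw [hexp1, Complex.exp_add, ← Complex.cpow_def_of_ne_zero hzt0,
    mul_comm (-(r - 2)) (Complex.log A), ← Complex.cpow_def_of_ne_zero hA]
  have hApow : A ^ (-(r - 2)) * A ^ (-2 : ℤ) = A ^ (-r) := by
    rw [← Complex.cpow_intCast A (-2 : ℤ), ← Complex.cpow_add _ _ hA]
    congr 1
    push_cast
    ring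
  calc (z - t) ^ (r - 2) * A ^ (-(r - 2)) * F (mact g z) * A ^ (-2 : ℤ)
      = (z - t) ^ (r - 2) * (A ^ (-(r - 2)) * A ^ (-2 : ℤ) * F (mact g z)) := by ring
    _ = (z - t) ^ (r - 2) * (A ^ (-r) * F (mact g z)) := by rw [hApow]
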